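/- Correctness of the reduction from SAT to consistency checking: Let C_1,…,C_m be clauses over propositional variables x_1,…,x_n, where each clause is a set of literals and no variable occurs both positively and negatively in the same clause. Define an influence graph (V,E,σ): V consists of the n variable vertices x_1,…,x_n and the m clause vertices C_1,…,C_m; the input vertices are exactly x_1,…,x_n; E contains an edge (x_j, C_i) exactly when x_j occurs in C_i; and σ(x_j, C_i) = + if x_j occurs positively in C_i and σ(x_j, C_i) = − if x_j occurs negatively in C_i. Define the partial vertex labeling μ by μ(C_i) = + for all 1 ≤ i ≤ m and μ undefined on x_1,…,x_n. Then (V,E,σ) and μ are consistent if and only if the conjunction C_1 ∧ … ∧ C_m is satisfiable. -/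

import Mathlib

/-- Sign multiplication: `true` stands for `+` and `false` for `−`
(`+·+ = −·− = +`, `+·− = −·+ = −`). -/
def signMul (a b : Bool) : Bool := a == b

/-- `σ'` and `μ'` are witnessing labelings for `W` in the influence graph with
vertex type `V`, edges `E`, partial edge labeling `σ`, partial vertex labeling `μ`,
and input vertices `I`: they are total, extend `σ` and `μ`, and for every
non-input vertex `i ∈ W` there is an edge `(j, i) ∈ E` with
`μ' i = μ' j · σ' (j, i)`. -/
def Witnessing {V : Type} (E : Set (V × V)) (σ : V × V → Option Bool)
    (μ : V → Option Bool) (I : Set V) (W : Set V)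
    (σ' : V × V → Bool) (μ' : V → Bool) : Prop :=
  (∀ e s, σ e = some s → σ' e = s) ∧
  (∀ i s, μ i = some s → μ' i = s) ∧
  (∀ i ∈ W, i ∉ I → ∃ j, (j, i) ∈ E ∧ μ' i = signMul (μ' j) (σ' (j, i)))

/-- The influence graph `(V, E, σ)` with inputs `I` and the partial vertex
labeling `μ` are consistent: there are witnessing labelings for all of `V`. -/
def Consistent {V : Type} (E : Set (V × V)) (σ : V × V → Option Bool)
    (μ : V → Option Bool) (I : Set V) : Prop :=
  ∃ σ' μ', Witnessing E σ μ I Set.univ σ' μ'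

/-- Correctness of the reduction from SAT to consistency checking.
Clauses `C_1,…,C_m` over variables `x_1,…,x_n` are given by
`pol : Fin m → Fin n → Option Bool`, where `pol i j = some true` (`some false`)
means `x_j` occurs positively (negatively) in `C_i`, and `pol i j = none` means
`x_j` does not occur in `C_i`; each clause is nonempty. The influence graph has
vertices `Fin n ⊕ Fin m`, inputs exactly the variable vertices, an edge
`(x_j, C_i)` labeled `pol i j` whenever `x_j` occurs in `C_i`, and the partial
vertex labeling assigns `+` to every clause vertex and is undefined on variable
vertices. Then the graph and labeling are consistent iff `C_1 ∧ … ∧ C_m` is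
satisfiable. -/
theorem sat_reduction (n m : ℕ) (pol : Fin m → Fin n → Option Bool)
    (hne : ∀ i, ∃ j, pol i j ≠ none) :
    Consistent (V := Fin n ⊕ Fin m)
      {e | ∃ j i, pol i j ≠ none ∧ e = (Sum.inl j, Sum.inr i)}
      (fun e =>
        match e with
        | (Sum.inl j, Sum.inr i) => pol i j
        | _ => none)
      (fun v =>
        match v with
        | Sum.inr _ => some true
        | Sum.inl _ => none)
      {v | ∃ j, v = Sum.inl j} ↔
    ∃ a : Fin n → Bool, ∀ i, ∃ j s, pol i j = some s ∧ a j = s := by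

  constructor
  · rintro ⟨σ', μ', hσ, hμ, hw⟩
    refine ⟨fun j => μ' (Sum.inl j), fun i => ?_⟩
    obtain ⟨j, hj, heq⟩ := hw (Sum.inr i) trivial (by rintro ⟨j, h⟩; cases h)
    obtain ⟨j', i', hpol, hji⟩ := hj
    obtain ⟨rfl, rfl⟩ : j = Sum.inl j' ∧ i = i' := by
      injection hji with h1 h2; exact ⟨h1, Sum.inr.inj h2 ▸ rfl⟩
    obtain ⟨s, hs⟩ := Option.ne_none_iff_exists'.mp hpol
    refine ⟨j', s, hs, ?_⟩
    have h1 : μ' (Sum.inr i) = true := hμ _ _ rfl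
    have h2 : σ' (Sum.inl j', Sum.inr i) = s := hσ _ _ (by simp [hs])
    rw [h1, h2] at heq
    simpa [signMul] using heq.symm
  · rintro ⟨a, ha⟩
    refine ⟨fun e => (match e with
        | (Sum.inl j, Sum.inr i) => pol i j
        | _ => none).getD true,
      Sum.elim a (fun _ => true), ?_, ?_, ?_⟩
    · intro e s hs; simp [hs]
    · rintro (j | i) s hs
      · simp at hs
      · simpa using hs.symm
    · rintro (j | i) - hin
      · exact absurd ⟨j, rfl⟩ hin
      · obtain ⟨j, s, hpol, has⟩ := ha i
        refine ⟨Sum.inl j, ⟨j, i, by simp [hpol], rfl⟩, ?_⟩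
        simp [signMul, hpol, has]
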